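/- Assume in addition that there is a constant k > 1 such that 2(k−1)(p'(τ))² ≥ k p(τ) p''(τ) for all τ > 0. Then c(τ)·h(τ) ≤ k·p(τ) for every τ > 0, i.e. √(−p'(τ)) · ∫_τ^∞ √(−p'(ξ)) dξ ≤ k p(τ). Combined with the lower bound p ≤ c h, this gives (1/(2k)) c (s − r) ≤ p ≤ (1/2) c (s − r) whenever s − r = 2h. -/

import Mathlib

open Real MeasureTheory Set Filter

/-- under the additional condition `2(k−1)(p')² ≥ k p p''` with `k > 1`,
one has `c·h ≤ k·p`, i.e. `√(-p' τ) * ∫_τ^∞ √(-p' ξ) dξ ≤ k p τ`; combined with the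
lower bound `p ≤ c h` this yields `(1/(2k)) c (s−r) ≤ p ≤ (1/2) c (s−r)` whenever
`s − r = 2h`. -/
theorem soundspeed_mul_h_le_k_pressure (p : ℝ → ℝ) (k : ℝ) (hk : 1 < k)
    (hreg : ContDiffOn ℝ 2 p (Set.Ioi 0))
    (hp' : ∀ τ > (0:ℝ), deriv p τ < 0)
    (hp'' : ∀ τ > (0:ℝ), 0 < deriv (deriv p) τ)
    (hlim : Tendsto p atTop (nhds 0))
    (hint : IntegrableOn (fun ξ => Real.sqrt (-deriv p ξ)) (Set.Ici 1))
    (hkineq : ∀ τ > (0:ℝ), k * (p τ * deriv (deriv p) τ) ≤ 2 * (k - 1) * (deriv p τ) ^ 2) :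
    ∀ τ > (0:ℝ),
      Real.sqrt (-deriv p τ) * (∫ ξ in Set.Ioi τ, Real.sqrt (-deriv p ξ)) ≤ k * p τ ∧
      ∀ s r : ℝ, s - r = 2 * ∫ ξ in Set.Ioi τ, Real.sqrt (-deriv p ξ) →
        (1 / (2 * k)) * (Real.sqrt (-deriv p τ) * (s - r)) ≤ p τ ∧
        p τ ≤ (1 / 2) * (Real.sqrt (-deriv p τ) * (s - r)) := by
  intro τ hτ
  have hk0 : (0:ℝ) < k := by linarith
  have hopen : IsOpen (Set.Ioi (0:ℝ)) := isOpen_Ioi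
  have hpdiff : DifferentiableOn ℝ p (Set.Ioi 0) := hreg.differentiableOn two_ne_zero
  have hpderiv : ∀ x ∈ Set.Ioi (0:ℝ), HasDerivAt p (deriv p x) x := fun x hx =>
    (hpdiff.differentiableAt (hopen.mem_nhds hx)).hasDerivAt
  have hcontp : ContinuousOn p (Set.Ioi 0) := hreg.continuousOn
  have hC1 : ContDiffOn ℝ 1 (deriv p) (Set.Ioi 0) :=
    hreg.deriv_of_isOpen hopen (by norm_num)
  have hcontp' : ContinuousOn (deriv p) (Set.Ioi 0) := hC1.continuousOn
  have hp'deriv : ∀ x ∈ Set.Ioi (0:ℝ), HasDerivAt (deriv p) (deriv (deriv p) x) x := fun x hx =>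
    ((hC1.differentiableOn one_ne_zero).differentiableAt (hopen.mem_nhds hx)).hasDerivAt
  -- p is strictly decreasing, hence positive
  have hanti : StrictAntiOn p (Set.Ioi 0) :=
    strictAntiOn_of_deriv_neg (convex_Ioi 0) hcontp (by rw [interior_Ioi]; exact hp')
  have hpnonneg : ∀ x ∈ Set.Ioi (0:ℝ), 0 ≤ p x := by
    intro x hx
    refine le_of_tendsto hlim ?_
    filter_upwards [Filter.eventually_ge_atTop x] with y hy
    rcases eq_or_lt_of_le hy with rfl | h
    · exact le_refl _
    · exact (hanti hx (lt_trans hx h) h).le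
  have hppos : ∀ x ∈ Set.Ioi (0:ℝ), 0 < p x := by
    intro x hx
    have h1 : x ∈ Set.Ioi (0:ℝ) := hx
    have h2 : x + 1 ∈ Set.Ioi (0:ℝ) := by simp only [Set.mem_Ioi] at *; linarith
    exact lt_of_le_of_lt (hpnonneg _ h2) (hanti h1 h2 (lt_add_one x))
  have hτsub : Set.Ioi τ ⊆ Set.Ioi (0:ℝ) := fun x hx => lt_trans hτ hx
  have hτsub' : Set.Ici τ ⊆ Set.Ioi (0:ℝ) := fun x hx => lt_of_lt_of_le hτ hx
  have hcτ : 0 < Real.sqrt (-deriv p τ) := Real.sqrt_pos.2 (neg_pos.2 (hp' τ hτ))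
  set a : ℝ := 1 - 1/k with ha_def
  have ha0 : 0 < a := by
    have : 1/k < 1 := by rw [div_lt_one hk0]; exact hk
    simp only [ha_def]; linarith
  -- the auxiliary function ψ = (-p') * p^(-2a) is monotone
  set ψ : ℝ → ℝ := fun x => (-deriv p x) * p x ^ (-(2*a)) with hψ_def
  set ψ' : ℝ → ℝ := fun x =>
    (-deriv (deriv p) x) * p x ^ (-(2*a)) +
      (-deriv p x) * (deriv p x * (-(2*a)) * p x ^ (-(2*a) - 1)) with hψ'_def
  have hψderiv : ∀ x ∈ Set.Ioi (0:ℝ), HasDerivAt ψ (ψ' x) x := by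
    intro x hx
    exact ((hp'deriv x hx).neg).mul
      ((hpderiv x hx).rpow_const (Or.inl (ne_of_gt (hppos x hx))))
  have hψ'nonneg : ∀ x ∈ Set.Ioi (0:ℝ), 0 ≤ ψ' x := by
    intro x hx
    have hpx : 0 < p x := hppos x hx
    have hineq : p x * deriv (deriv p) x ≤ 2 * a * (deriv p x)^2 := by
      have h1 := hkineq x hx
      have hkk : k * (1/k) = 1 := mul_one_div_cancel (ne_of_gt hk0)
      have h2a : 2 * a * k = 2 * (k - 1) := by
        simp only [ha_def]; field_simp
      nlinarith [sq_nonneg (deriv p x)]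
    have hq : p x ^ (-(2*a)) = p x ^ (-(2*a) - 1) * p x := by
      rw [← Real.rpow_add_one (ne_of_gt hpx)]; congr 1; ring
    have hP : 0 < p x ^ (-(2*a) - 1) := Real.rpow_pos_of_pos hpx _
    simp only [hψ'_def, hq]
    nlinarith [mul_nonneg hP.le (sub_nonneg.2 hineq)]
  have hψmono : MonotoneOn ψ (Set.Ioi 0) := by
    apply monotoneOn_of_deriv_nonneg (convex_Ioi 0)
    · exact fun x hx => (hψderiv x hx).continuousAt.continuousWithinAt
    · rw [interior_Ioi]
      exact fun x hx => (hψderiv x hx).differentiableAt.differentiableWithinAt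
    · rw [interior_Ioi]
      intro x hx
      rw [(hψderiv x hx).deriv]
      exact hψ'nonneg x hx
  -- sqrt of ψ: c x * p x ^ (-a)
  have hsqrtψ : ∀ x ∈ Set.Ioi (0:ℝ),
      Real.sqrt (ψ x) = Real.sqrt (-deriv p x) * p x ^ (-a) := by
    intro x hx
    have hpx : 0 < p x := hppos x hx
    have h1 : p x ^ (-(2*a)) = (p x ^ (-a)) ^ (2:ℕ) := by
      rw [← Real.rpow_natCast (p x ^ (-a)) 2, ← Real.rpow_mul hpx.le]
      congr 1; push_cast; ring
    rw [hψ_def]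
    simp only []
    rw [Real.sqrt_mul (neg_nonneg.2 (hp' x hx).le), h1, Real.sqrt_sq
      (Real.rpow_nonneg hpx.le _)]
  -- key comparison: for ξ > τ, c τ * p τ^(-a) ≤ c ξ * p ξ^(-a)
  have hkey : ∀ ξ ∈ Set.Ioi τ,
      Real.sqrt (-deriv p τ) * p τ ^ (-a) ≤ Real.sqrt (-deriv p ξ) * p ξ ^ (-a) := by
    intro ξ hξ
    have hξ0 : ξ ∈ Set.Ioi (0:ℝ) := hτsub hξ
    have := hψmono (Set.mem_Ioi.2 hτ) hξ0 (le_of_lt hξ)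
    have h2 := Real.sqrt_le_sqrt this
    rwa [hsqrtψ τ (Set.mem_Ioi.2 hτ), hsqrtψ ξ hξ0] at h2
  -- pointwise domination of c by the FTC integrand
  set C : ℝ := p τ ^ a / Real.sqrt (-deriv p τ) with hC_def
  have hbound : ∀ ξ ∈ Set.Ioi τ,
      Real.sqrt (-deriv p ξ) ≤ C * ((-deriv p ξ) * p ξ ^ (-a)) := by
    intro ξ hξ
    have hξ0 : ξ ∈ Set.Ioi (0:ℝ) := hτsub hξ
    have hcξ : 0 < Real.sqrt (-deriv p ξ) := Real.sqrt_pos.2 (neg_pos.2 (hp' ξ hξ0))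
    have hpτ : 0 < p τ := hppos τ hτ
    have hpξ : 0 < p ξ := hppos ξ hξ0
    have hPa : 0 < p τ ^ a := Real.rpow_pos_of_pos hpτ _
    have hPa' : 0 < p ξ ^ a := Real.rpow_pos_of_pos hpξ _
    have hsq' : Real.sqrt (-deriv p ξ) * Real.sqrt (-deriv p ξ) = -deriv p ξ :=
      Real.mul_self_sqrt (neg_nonneg.2 (hp' ξ hξ0).le)
    have h1 := hkey ξ hξ
    rw [Real.rpow_neg hpτ.le, Real.rpow_neg hpξ.le, ← div_eq_mul_inv, ← div_eq_mul_inv,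
      div_le_div_iff₀ hPa hPa'] at h1
    rw [hC_def, Real.rpow_neg hpξ.le, ← div_eq_mul_inv, div_mul_div_comm,
      le_div_iff₀ (by positivity)]
    calc Real.sqrt (-deriv p ξ) * (Real.sqrt (-deriv p τ) * p ξ ^ a)
        ≤ Real.sqrt (-deriv p ξ) * (Real.sqrt (-deriv p ξ) * p τ ^ a) :=
          mul_le_mul_of_nonneg_left h1 hcξ.le
      _ = p τ ^ a * -deriv p ξ := by linear_combination (p τ ^ a) * hsq'
  have hpτ : 0 < p τ := hppos τ hτ
  -- FTC 1 : ∫_τ^∞ (-p') = p τ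
  have hcontIci : ContinuousWithinAt (fun x => -p x) (Set.Ici τ) τ :=
    ((hcontp.mono hτsub').neg) τ Set.self_mem_Ici
  have hderivIoi : ∀ x ∈ Set.Ioi τ, HasDerivAt (fun x => -p x) (-deriv p x) x :=
    fun x hx => (hpderiv x (hτsub hx)).neg
  have hnonnegIoi : ∀ x ∈ Set.Ioi τ, 0 ≤ -deriv p x :=
    fun x hx => (neg_pos.2 (hp' x (hτsub hx))).le
  have htends : Tendsto (fun x => -p x) atTop (nhds (0:ℝ)) := by
    simpa using hlim.neg
  have hint1 : ∫ ξ in Set.Ioi τ, -deriv p ξ = p τ := by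
    have := integral_Ioi_of_hasDerivAt_of_nonneg hcontIci hderivIoi hnonnegIoi htends
    simpa using this
  have hint1' : IntegrableOn (fun ξ => -deriv p ξ) (Set.Ioi τ) :=
    integrableOn_Ioi_deriv_of_nonneg hcontIci hderivIoi hnonnegIoi htends
  -- FTC 2 : ∫_τ^∞ (-p') p^(-a) = k p(τ)^(1/k)
  set G : ℝ → ℝ := fun x => -(k * p x ^ ((1:ℝ)/k)) with hG_def
  set G' : ℝ → ℝ := fun x => (-deriv p x) * p x ^ (-a) with hG'_def
  have hGderiv : ∀ x ∈ Set.Ioi (0:ℝ), HasDerivAt G (G' x) x := by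
    intro x hx
    have hpx : 0 < p x := hppos x hx
    have h := (((hpderiv x hx).rpow_const (p := (1:ℝ)/k)
      (Or.inl (ne_of_gt hpx))).const_mul k).neg
    have he : -(k * (deriv p x * ((1:ℝ)/k) * p x ^ ((1:ℝ)/k - 1)))
        = (-deriv p x) * p x ^ (-a) := by
      rw [show (1:ℝ)/k - 1 = -a by simp only [ha_def]; ring]
      field_simp
    rw [hG'_def]
    simpa only [he, hG_def, Pi.neg_def] using h
  have hG'nonneg : ∀ x ∈ Set.Ioi τ, 0 ≤ G' x := by
    intro x hx
    exact mul_nonneg (neg_pos.2 (hp' x (hτsub hx))).le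
      (Real.rpow_pos_of_pos (hppos x (hτsub hx)) _).le
  have hGtends : Tendsto G atTop (nhds (0:ℝ)) := by
    have hc : ContinuousAt (fun y : ℝ => y ^ ((1:ℝ)/k)) 0 :=
      Real.continuousAt_rpow_const 0 _ (Or.inr (by positivity))
    have h0 : Tendsto (fun x => p x ^ ((1:ℝ)/k)) atTop (nhds ((0:ℝ) ^ ((1:ℝ)/k))) :=
      hc.tendsto.comp hlim
    rw [Real.zero_rpow (by positivity : ((1:ℝ)/k) ≠ 0)] at h0
    have h2 := (h0.const_mul k).neg
    rw [hG_def]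
    simpa using h2
  have hGcont : ContinuousWithinAt G (Set.Ici τ) τ :=
    (hGderiv τ (Set.mem_Ioi.2 hτ)).continuousAt.continuousWithinAt
  have hint2 : ∫ ξ in Set.Ioi τ, G' ξ = k * p τ ^ ((1:ℝ)/k) := by
    have := integral_Ioi_of_hasDerivAt_of_nonneg hGcont
      (fun x hx => hGderiv x (hτsub hx)) hG'nonneg hGtends
    simpa [hG_def] using this
  have hint2' : IntegrableOn G' (Set.Ioi τ) :=
    integrableOn_Ioi_deriv_of_nonneg hGcont (fun x hx => hGderiv x (hτsub hx))
      hG'nonneg hGtends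
  -- integrability of c on Ioi τ by domination
  have hcmeas : AEStronglyMeasurable (fun ξ => Real.sqrt (-deriv p ξ))
      (volume.restrict (Set.Ioi τ)) :=
    ((Real.continuous_sqrt.comp_continuousOn hcontp'.neg).mono hτsub).aestronglyMeasurable
      measurableSet_Ioi
  have hCG'int : IntegrableOn (fun ξ => C * G' ξ) (Set.Ioi τ) := hint2'.const_mul C
  have hcint : IntegrableOn (fun ξ => Real.sqrt (-deriv p ξ)) (Set.Ioi τ) := by
    refine Integrable.mono' hCG'int hcmeas ?_
    refine (ae_restrict_iff' measurableSet_Ioi).2 (Filter.Eventually.of_forall ?_)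
    intro ξ hξ
    rw [Real.norm_eq_abs, abs_of_nonneg (Real.sqrt_nonneg _)]
    exact hbound ξ hξ
  -- the two main inequalities
  have hCpos : 0 < C := div_pos (Real.rpow_pos_of_pos hpτ _) hcτ
  have hIle : (∫ ξ in Set.Ioi τ, Real.sqrt (-deriv p ξ)) ≤ C * (k * p τ ^ ((1:ℝ)/k)) := by
    calc (∫ ξ in Set.Ioi τ, Real.sqrt (-deriv p ξ))
        ≤ ∫ ξ in Set.Ioi τ, C * G' ξ :=
          setIntegral_mono_on hcint hCG'int measurableSet_Ioi hbound
      _ = C * ∫ ξ in Set.Ioi τ, G' ξ := integral_const_mul _ _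
      _ = C * (k * p τ ^ ((1:ℝ)/k)) := by rw [hint2]
  have hprod : p τ ^ a * p τ ^ ((1:ℝ)/k) = p τ := by
    rw [← Real.rpow_add hpτ, show a + (1:ℝ)/k = 1 by simp only [ha_def]; ring,
      Real.rpow_one]
  have main1 : Real.sqrt (-deriv p τ) * (∫ ξ in Set.Ioi τ, Real.sqrt (-deriv p ξ))
      ≤ k * p τ := by
    have h1 := mul_le_mul_of_nonneg_left hIle hcτ.le
    have h2 : Real.sqrt (-deriv p τ) * (C * (k * p τ ^ ((1:ℝ)/k))) = k * p τ := by
      rw [hC_def]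
      field_simp
      linear_combination hprod
    linarith [h1, h2.le, h2.ge]
  have main2 : p τ ≤ Real.sqrt (-deriv p τ) * ∫ ξ in Set.Ioi τ, Real.sqrt (-deriv p ξ) := by
    have hptw : ∀ ξ ∈ Set.Ioi τ, -deriv p ξ ≤
        Real.sqrt (-deriv p τ) * Real.sqrt (-deriv p ξ) := by
      intro ξ hξ
      have hξ0 : ξ ∈ Set.Ioi (0:ℝ) := hτsub hξ
      have hmono' : StrictMonoOn (deriv p) (Set.Ioi 0) :=
        strictMonoOn_of_deriv_pos (convex_Ioi 0) hcontp' (by rw [interior_Ioi]; exact hp'')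
      have hle : -deriv p ξ ≤ -deriv p τ :=
        neg_le_neg (hmono' (Set.mem_Ioi.2 hτ) hξ0 hξ).le
      have hcle : Real.sqrt (-deriv p ξ) ≤ Real.sqrt (-deriv p τ) := Real.sqrt_le_sqrt hle
      have hms : Real.sqrt (-deriv p ξ) * Real.sqrt (-deriv p ξ) = -deriv p ξ :=
        Real.mul_self_sqrt (neg_nonneg.2 (hp' ξ hξ0).le)
      calc -deriv p ξ = Real.sqrt (-deriv p ξ) * Real.sqrt (-deriv p ξ) := hms.symm
        _ ≤ Real.sqrt (-deriv p τ) * Real.sqrt (-deriv p ξ) :=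
            mul_le_mul_of_nonneg_right hcle (Real.sqrt_nonneg _)
    calc p τ = ∫ ξ in Set.Ioi τ, -deriv p ξ := hint1.symm
      _ ≤ ∫ ξ in Set.Ioi τ, Real.sqrt (-deriv p τ) * Real.sqrt (-deriv p ξ) :=
          setIntegral_mono_on hint1' (hcint.const_mul _) measurableSet_Ioi hptw
      _ = Real.sqrt (-deriv p τ) * ∫ ξ in Set.Ioi τ, Real.sqrt (-deriv p ξ) :=
          integral_const_mul _ _
  refine ⟨main1, fun s r hs => ⟨?_, ?_⟩⟩
  · rw [hs]
    have he : 1 / (2*k) * (Real.sqrt (-deriv p τ) *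
        (2 * ∫ ξ in Set.Ioi τ, Real.sqrt (-deriv p ξ)))
        = (Real.sqrt (-deriv p τ) * ∫ ξ in Set.Ioi τ, Real.sqrt (-deriv p ξ)) / k := by
      field_simp
    rw [he, div_le_iff₀ hk0]
    nlinarith [main1]
  · rw [hs]
    have he : 1 / 2 * (Real.sqrt (-deriv p τ) *
        (2 * ∫ ξ in Set.Ioi τ, Real.sqrt (-deriv p ξ)))
        = Real.sqrt (-deriv p τ) * ∫ ξ in Set.Ioi τ, Real.sqrt (-deriv p ξ) := by ring
    rw [he]
    exact main2
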